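/- Let λ₂ > 0, p₂ ∈ ℝ, and suppose ẏ_ref ∈ W^{1,∞}(ℝ≥0, ℝ) is bounded. If the initial value η̄⁰ = −∫₀^∞ e^{−λ₂ s} λ₂ p₂ y_ref(s) ds is chosen, then the solution of η̄̇(t) = λ₂ η̄(t) + λ₂ p₂ y_ref(t), η̄(0) = η̄⁰, is bounded on ℝ≥0 and is given explicitly by η̄(t) = −∫_t^∞ e^{λ₂(t−s)} λ₂ p₂ y_ref(s) ds. -/

import Mathlib

open Real MeasureTheory Set

/-- With the initial value η̄⁰ = −∫₀^∞ e^{−λ₂s} λ₂p₂ y_ref(s) ds, the solution of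
    η̄' = λ₂η̄ + λ₂p₂y_ref is bounded on ℝ≥0 and given by
    η̄(t) = −∫ₜ^∞ e^{λ₂(t−s)} λ₂p₂ y_ref(s) ds. -/
theorem bounded_reference_solution (lam₂ p₂ : ℝ) (hlam : lam₂ > 0)
    (y_ref : ℝ → ℝ) (hmeas : Measurable y_ref)
    (hbdd : ∃ C, ∀ t ≥ (0:ℝ), |y_ref t| ≤ C)
    (x : ℝ → ℝ)
    (hx0 : x 0 = -∫ s in Ioi (0:ℝ), Real.exp (-lam₂ * s) * lam₂ * p₂ * y_ref s)
    (hode : ∀ t ≥ (0:ℝ), HasDerivAt x (lam₂ * x t + lam₂ * p₂ * y_ref t) t) :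
    (∃ C, ∀ t ≥ (0:ℝ), |x t| ≤ C) ∧
    (∀ t ≥ (0:ℝ), x t = -∫ s in Ioi t, Real.exp (lam₂ * (t - s)) * lam₂ * p₂ * y_ref s) := by
  obtain ⟨C, hC⟩ := hbdd
  set f : ℝ → ℝ := fun s => Real.exp (-lam₂ * s) * lam₂ * p₂ * y_ref s with hf
  set K : ℝ := lam₂ * |p₂| * C with hK
  have hC0 : 0 ≤ C := le_trans (abs_nonneg _) (hC 0 le_rfl)
  have hK0 : 0 ≤ K := by positivity
  have hfm : Measurable f := by
    apply Measurable.mul _ hmeas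
    apply Measurable.mul _ measurable_const
    exact (Real.measurable_exp.comp (measurable_id.const_mul _)).mul measurable_const
  -- pointwise bound on [0, ∞)
  have hfb : ∀ s : ℝ, 0 ≤ s → ‖f s‖ ≤ K * Real.exp (-lam₂ * s) := by
    intro s hs
    have h1 : |f s| = Real.exp (-lam₂ * s) * lam₂ * |p₂| * |y_ref s| := by
      simp [hf, abs_mul, abs_of_pos (Real.exp_pos _), abs_of_pos hlam]
    rw [Real.norm_eq_abs, h1]
    have := hC s hs
    calc Real.exp (-lam₂ * s) * lam₂ * |p₂| * |y_ref s|
        ≤ Real.exp (-lam₂ * s) * lam₂ * |p₂| * C := by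
          apply mul_le_mul_of_nonneg_left this; positivity
      _ = K * Real.exp (-lam₂ * s) := by ring
  -- integrability on Ioi a for a ≥ 0
  have hintK : ∀ a : ℝ, IntegrableOn (fun s => K * Real.exp (-lam₂ * s)) (Ioi a) := by
    intro a
    exact (exp_neg_integrableOn_Ioi a hlam).const_mul K
  have hint : ∀ a : ℝ, 0 ≤ a → IntegrableOn f (Ioi a) := by
    intro a ha
    apply Integrable.mono' (hintK a) (hfm.aestronglyMeasurable.restrict)
    filter_upwards [ae_restrict_mem measurableSet_Ioi] with s hs
    exact hfb s (le_trans ha (le_of_lt hs))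
  -- value of the exponential integral
  have hexpint : ∀ t : ℝ, (∫ s in Ioi t, Real.exp (-lam₂ * s)) =
      lam₂⁻¹ * Real.exp (-(lam₂ * t)) := by
    intro t
    have : (∫ s in Ioi t, Real.exp (-(lam₂ * s))) =
        lam₂⁻¹ • ∫ s in Ioi (lam₂ * t), Real.exp (-s) :=
      integral_comp_mul_left_Ioi (fun u => Real.exp (-u)) t hlam
    rw [integral_exp_neg_Ioi, smul_eq_mul] at this
    simpa [neg_mul] using this
  -- the auxiliary function g
  set g : ℝ → ℝ := fun u => Real.exp (-lam₂ * u) * x u with hg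
  have hgderiv : ∀ u : ℝ, 0 ≤ u → HasDerivAt g (f u) u := by
    intro u hu
    have h1 : HasDerivAt (fun v : ℝ => Real.exp (-lam₂ * v))
        (-lam₂ * Real.exp (-lam₂ * u)) u := by
      simpa [mul_comm] using ((hasDerivAt_id u).const_mul (-lam₂)).exp
    have := h1.mul (hode u hu)
    refine HasDerivAt.congr_deriv this ?_
    simp only [hf]; ring
  -- key identity : for t ≥ 0, g t = - ∫ s in Ioi t, f s
  have hkey : ∀ t : ℝ, 0 ≤ t → g t = -∫ s in Ioi t, f s := by
    intro t ht
    have hii : IntervalIntegrable f volume 0 t := by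
      rw [intervalIntegrable_iff_integrableOn_Ioc_of_le ht]
      exact (hint 0 le_rfl).mono_set Ioc_subset_Ioi_self
    have hftc : (∫ s in (0:ℝ)..t, f s) = g t - g 0 := by
      apply intervalIntegral.integral_eq_sub_of_hasDerivAt _ hii
      intro s hs
      rw [uIcc_of_le ht] at hs
      exact hgderiv s hs.1
    have hsplit : (∫ s in Ioi (0:ℝ), f s) =
        (∫ s in Ioc (0:ℝ) t, f s) + ∫ s in Ioi t, f s := by
      rw [← setIntegral_union (Ioc_disjoint_Ioi le_rfl) measurableSet_Ioi
        ((hint 0 le_rfl).mono_set Ioc_subset_Ioi_self) (hint t ht),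
        Ioc_union_Ioi_eq_Ioi ht]
    have hg0 : g 0 = -∫ s in Ioi (0:ℝ), f s := by
      simp [hg, hx0, hf]
    have : g t = g 0 + ∫ s in (0:ℝ)..t, f s := by rw [hftc]; ring
    rw [this, hg0, intervalIntegral.integral_of_le ht, hsplit]
    ring
  -- explicit formula for x
  have hform : ∀ t : ℝ, 0 ≤ t →
      x t = -∫ s in Ioi t, Real.exp (lam₂ * (t - s)) * lam₂ * p₂ * y_ref s := by
    intro t ht
    have hx : x t = Real.exp (lam₂ * t) * g t := by
      simp only [hg, ← mul_assoc, ← Real.exp_add]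
      ring_nf
      simp
    rw [hx, hkey t ht, mul_neg, ← MeasureTheory.integral_const_mul]
    congr 1
    apply setIntegral_congr_fun measurableSet_Ioi
    intro s _
    simp only [hf, ← mul_assoc, ← Real.exp_add]
    ring_nf
  constructor
  · refine ⟨|p₂| * C, fun t ht => ?_⟩
    have hx : x t = Real.exp (lam₂ * t) * (-∫ s in Ioi t, f s) := by
      have : x t = Real.exp (lam₂ * t) * g t := by
        simp only [hg, ← mul_assoc, ← Real.exp_add]
        ring_nf
        simp
      rw [this, hkey t ht]
    have h1 : |∫ s in Ioi t, f s| ≤ K * (lam₂⁻¹ * Real.exp (-(lam₂ * t))) := by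
      calc |∫ s in Ioi t, f s| ≤ ∫ s in Ioi t, ‖f s‖ := by
            exact norm_integral_le_integral_norm f
        _ ≤ ∫ s in Ioi t, K * Real.exp (-lam₂ * s) := by
            apply setIntegral_mono_on (hint t ht).norm (hintK t) measurableSet_Ioi
            intro s hs
            exact hfb s (le_trans ht (le_of_lt hs))
        _ = K * (lam₂⁻¹ * Real.exp (-(lam₂ * t))) := by
            rw [MeasureTheory.integral_const_mul, hexpint t]
    calc |x t| = Real.exp (lam₂ * t) * |∫ s in Ioi t, f s| := by
          rw [hx, abs_mul, abs_neg, abs_of_pos (Real.exp_pos _)]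
      _ ≤ Real.exp (lam₂ * t) * (K * (lam₂⁻¹ * Real.exp (-(lam₂ * t)))) := by
          exact mul_le_mul_of_nonneg_left h1 (le_of_lt (Real.exp_pos _))
      _ = (Real.exp (lam₂ * t) * Real.exp (-(lam₂ * t))) * (lam₂ * lam₂⁻¹) * (|p₂| * C) := by
          rw [hK]; ring
      _ = |p₂| * C := by
          rw [← Real.exp_add, add_neg_cancel, Real.exp_zero,
            mul_inv_cancel₀ (ne_of_gt hlam)]
          ring
  · exact fun t ht => hform t ht
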